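/- For n ≥ 1, let T_n be the transitive tournament on vertices {1, 2, …, n}, with an arc from u to v exactly when u < v. Then the characteristic polynomial of its Hermitian adjacency matrix H(T_n) satisfies φ(T_n, t) = Σ_{j=0}^{⌊n/2⌋} (−1)^j · C(n, 2j) · t^{n−2j} = ½·(t+i)^n + ½·(t−i)^n, as polynomials over ℂ. -/

import Mathlib

open Matrix Complex Polynomial

/-- Hermitian adjacency matrix of a digraph given by its arc relation `E`. -/
def hermAdj {V : Type*} (E : V → V → Prop) [DecidableRel E] : Matrix V V ℂ :=
  fun u v =>
    if E u v ∧ E v u then 1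
    else if E u v then Complex.I
    else if E v u then -Complex.I
    else 0

noncomputable def Emat (m : ℕ) : Matrix (Fin m) (Fin m) (Polynomial ℂ) :=
  fun u v =>
    if (u : ℕ) = 0 then Polynomial.C Complex.I
    else if (v : ℕ) + 1 = (u : ℕ) then -(Polynomial.X + Polynomial.C Complex.I)
    else if (v : ℕ) = (u : ℕ) then Polynomial.X - Polynomial.C Complex.I
    else 0

lemma two_half : (2 : Polynomial ℂ) * Polynomial.C (1/2 : ℂ) = 1 := by
  rw [← map_ofNat (Polynomial.C : ℂ →+* Polynomial ℂ) 2, ← _root_.map_mul]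
  norm_num

lemma Emat_det : ∀ m : ℕ,
    (Emat (m+1)).det = Polynomial.C (1/2 : ℂ) *
      ((Polynomial.X + Polynomial.C Complex.I) ^ (m+1)
        - (Polynomial.X - Polynomial.C Complex.I) ^ (m+1)) := by
  intro m
  induction m with
  | zero =>
    rw [Matrix.det_fin_one]
    have h := two_half
    simp only [Emat, Fin.val_zero, if_pos rfl, pow_one, Fin.isValue]
    norm_num
    linear_combination (-Polynomial.C Complex.I) * h
  | succ m ih =>
    rw [Matrix.det_succ_column_zero, Fin.sum_univ_succ, Fin.sum_univ_succ]
    have htail : ∀ i : Fin m, Emat (m + 2) i.succ.succ 0 = 0 := by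
      intro i
      simp [Emat]
    simp only [htail]
    have h0 : ((Emat (m+2)).submatrix (Fin.succAbove 0) Fin.succ).det
        = (Polynomial.X - Polynomial.C Complex.I)^(m+1) := by
      rw [Matrix.det_of_lowerTriangular]
      · rw [Finset.prod_congr rfl (fun i _ => ?_), Finset.prod_const,
          Finset.card_univ, Fintype.card_fin]
        show (Emat (m+2)).submatrix (Fin.succAbove 0) Fin.succ i i
            = Polynomial.X - Polynomial.C Complex.I
        simp [Emat, Fin.succAbove_zero]
      · intro i j hij
        have hij' : (i : ℕ) < (j : ℕ) := hij
        simp only [Matrix.submatrix_apply, Fin.succAbove_zero, Emat, Fin.val_succ]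
        rw [if_neg (by omega), if_neg (by omega), if_neg (by omega)]
    have h1 : (Emat (m+2)).submatrix (Fin.succ 0).succAbove Fin.succ = Emat (m+1) := by
      ext k j
      refine Fin.cases ?_ (fun l => ?_) k
      · rw [Matrix.submatrix_apply,
          Fin.succAbove_of_castSucc_lt _ _ (by simp [Fin.lt_def])]
        simp [Emat]
      · rw [Matrix.submatrix_apply,
          Fin.succAbove_of_le_castSucc _ _ (by simp [Fin.le_def])]
        simp only [Emat, Fin.val_succ]
        split_ifs <;> first | rfl | (exfalso; omega)
    have e00 : Emat (m+2) 0 0 = Polynomial.C Complex.I := by simp [Emat]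
    have e10 : Emat (m+2) (Fin.succ 0) 0 = -(Polynomial.X + Polynomial.C Complex.I) := by
      simp [Emat]
    rw [h0, h1, e00, e10, ih]
    simp only [Fin.val_zero, pow_zero, one_mul, Fin.val_succ, pow_one, mul_zero, zero_mul,
      Finset.sum_const_zero, add_zero, pow_succ]
    linear_combination (-((Polynomial.X - Polynomial.C Complex.I)^(m+1)
      * Polynomial.C Complex.I)) * two_half

noncomputable def Bmat (n : ℕ) : Matrix (Fin n) (Fin n) (Polynomial ℂ) :=
  fun u v =>
    if (u : ℕ) = 0 then (if (v : ℕ) = 0 then Polynomial.X else Polynomial.C Complex.I)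
    else if (v : ℕ) + 1 = (u : ℕ) then -(Polynomial.X + Polynomial.C Complex.I)
    else if (v : ℕ) = (u : ℕ) then Polynomial.X - Polynomial.C Complex.I
    else 0

lemma Bmat_det : ∀ m : ℕ,
    (Bmat (m+1)).det = Polynomial.C (1/2 : ℂ) *
      ((Polynomial.X + Polynomial.C Complex.I) ^ (m+1)
        + (Polynomial.X - Polynomial.C Complex.I) ^ (m+1)) := by
  intro m
  have key : ∀ (k : ℕ) (u v : Fin k), (u : ℕ) ≠ 0 → Bmat k u v = Emat k u v := by
    intro k u v hu
    simp only [Bmat, Emat, if_neg hu]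
  cases m with
  | zero =>
    rw [Matrix.det_fin_one]
    simp only [Bmat, Fin.val_zero, if_pos rfl, pow_one, Fin.isValue]
    norm_num
    linear_combination (-Polynomial.X) * two_half
  | succ m =>
    rw [Matrix.det_succ_column_zero, Fin.sum_univ_succ, Fin.sum_univ_succ]
    have htail : ∀ i : Fin m, Bmat (m + 2) i.succ.succ 0 = 0 := by
      intro i
      rw [key _ _ _ (by simp)]
      simp [Emat]
    simp only [htail]
    have hm0 : (Bmat (m+2)).submatrix (Fin.succAbove 0) Fin.succ
        = (Emat (m+2)).submatrix (Fin.succAbove 0) Fin.succ := by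
      refine Matrix.ext fun k j => ?_
      simp only [Matrix.submatrix_apply, Fin.succAbove_zero]
      exact key _ _ _ (by simp)
    have hm1 : (Bmat (m+2)).submatrix (Fin.succ 0).succAbove Fin.succ
        = (Emat (m+2)).submatrix (Fin.succ 0).succAbove Fin.succ := by
      refine Matrix.ext fun k j => ?_
      simp only [Matrix.submatrix_apply]
      by_cases h : (((Fin.succ 0 : Fin (m+2)).succAbove k : Fin (m+2)) : ℕ) = 0
      · simp [Bmat, Emat, h, Fin.val_succ]
      · exact key _ _ _ h
    have h0 : ((Emat (m+2)).submatrix (Fin.succAbove 0) Fin.succ).det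
        = (Polynomial.X - Polynomial.C Complex.I)^(m+1) := by
      rw [Matrix.det_of_lowerTriangular]
      · rw [Finset.prod_congr rfl (fun i _ => ?_), Finset.prod_const,
          Finset.card_univ, Fintype.card_fin]
        show (Emat (m+2)).submatrix (Fin.succAbove 0) Fin.succ i i
            = Polynomial.X - Polynomial.C Complex.I
        simp [Emat, Fin.succAbove_zero]
      · intro i j hij
        have hij' : (i : ℕ) < (j : ℕ) := hij
        simp only [Matrix.submatrix_apply, Fin.succAbove_zero, Emat, Fin.val_succ]
        rw [if_neg (by omega), if_neg (by omega), if_neg (by omega)]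
    have h1 : (Emat (m+2)).submatrix (Fin.succ 0).succAbove Fin.succ = Emat (m+1) := by
      ext k j
      refine Fin.cases ?_ (fun l => ?_) k
      · rw [Matrix.submatrix_apply,
          Fin.succAbove_of_castSucc_lt _ _ (by simp [Fin.lt_def])]
        simp [Emat]
      · rw [Matrix.submatrix_apply,
          Fin.succAbove_of_le_castSucc _ _ (by simp [Fin.le_def])]
        simp only [Emat, Fin.val_succ]
        split_ifs <;> first | rfl | (exfalso; omega)
    have e00 : Bmat (m+2) 0 0 = Polynomial.X := by simp [Bmat]
    have e10 : Bmat (m+2) (Fin.succ 0) 0 = -(Polynomial.X + Polynomial.C Complex.I) := by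
      rw [key _ _ _ (by simp)]
      simp [Emat]
    rw [hm0, hm1, h0, h1, e00, e10, Emat_det]
    simp only [Fin.val_zero, pow_zero, one_mul, Fin.val_succ, pow_one, mul_zero, zero_mul,
      Finset.sum_const_zero, add_zero, pow_succ]
    linear_combination (-((Polynomial.X - Polynomial.C Complex.I)^(m+1)
      * Polynomial.X)) * two_half

noncomputable def Amat (n : ℕ) : Matrix (Fin n) (Fin n) (Polynomial ℂ) :=
  fun u v =>
    if (u : ℕ) = (v : ℕ) then Polynomial.X
    else if (v : ℕ) < (u : ℕ) then -(Polynomial.C Complex.I)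
    else Polynomial.C Complex.I

lemma Amat_eq (n : ℕ) :
    (charmatrix (hermAdj (fun u v : Fin n => u < v))).submatrix
      (Fin.revPerm : Equiv.Perm (Fin n)) (Fin.revPerm : Equiv.Perm (Fin n)) = Amat n := by
  refine Matrix.ext fun u v => ?_
  simp only [Matrix.submatrix_apply, Fin.revPerm_apply]
  rcases lt_trichotomy u v with h | h | h
  · have hne : u.rev ≠ v.rev := by
      simp [Fin.rev_inj]; exact h.ne
    rw [charmatrix_apply_ne _ _ _ hne]
    have h1 : ¬ (u.rev < v.rev) := by rw [Fin.rev_lt_rev]; exact (lt_asymm h)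
    have h2 : v.rev < u.rev := by rw [Fin.rev_lt_rev]; exact h
    simp only [hermAdj, if_neg h1, if_pos h2, Amat,
      if_neg (by exact_mod_cast (Fin.val_ne_of_ne h.ne)),
      if_neg (not_lt.mpr (le_of_lt (by exact_mod_cast h)))]
    rw [if_neg (fun hc => absurd hc.2 (lt_asymm hc.1)), if_neg (by exact_mod_cast (lt_asymm h))]
    simp
  · subst h
    rw [charmatrix_apply_eq]
    simp [hermAdj, Amat]
  · have hne : u.rev ≠ v.rev := by
      simp [Fin.rev_inj]; exact h.ne'
    rw [charmatrix_apply_ne _ _ _ hne]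
    have h1 : u.rev < v.rev := by rw [Fin.rev_lt_rev]; exact h
    simp only [hermAdj, if_pos h1, Amat,
      if_neg (by exact_mod_cast (Fin.val_ne_of_ne h.ne')),
      if_pos (by exact_mod_cast h)]
    rw [if_neg (fun hc => absurd hc.2 (lt_asymm hc.1)), if_pos (by exact_mod_cast h)]

lemma Amat_det_eq (m : ℕ) : (Amat (m+1)).det = (Bmat (m+1)).det := by
  refine Matrix.det_eq_of_forall_row_eq_smul_add_pred (fun _ => 1) ?_ ?_
  · intro j
    simp only [Amat, Bmat, Fin.val_zero]
    split_ifs <;> first | rfl | omega | (simp_all <;> (intro hj; subst hj; simp at *))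
  · intro i j
    simp only [Amat, Bmat, Fin.val_succ, Fin.coe_castSucc, one_mul]
    split_ifs <;> first | ring1 | omega | simp_all

lemma binom_id (n : ℕ) :
    ∑ j ∈ Finset.range (n / 2 + 1),
        Polynomial.C ((-1 : ℂ) ^ j * (n.choose (2 * j) : ℂ)) * Polynomial.X ^ (n - 2 * j) =
      Polynomial.C (1 / 2 : ℂ) * (Polynomial.X + Polynomial.C Complex.I) ^ n
        + Polynomial.C (1 / 2 : ℂ) * (Polynomial.X - Polynomial.C Complex.I) ^ n := by
  have expand : ∀ z : ℂ, (Polynomial.X + Polynomial.C z)^n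
      = ∑ k ∈ Finset.range (n+1),
          Polynomial.C (z^k * (n.choose k : ℂ)) * Polynomial.X^(n-k) := by
    intro z
    rw [add_comm, add_pow]
    refine Finset.sum_congr rfl fun k hk => ?_
    rw [_root_.map_mul, ← map_pow, Polynomial.C_eq_natCast]
    ring
  have hsub : (Polynomial.X - Polynomial.C Complex.I)
      = Polynomial.X + Polynomial.C (-Complex.I) := by
    rw [map_neg]; ring
  rw [hsub, expand, expand, Finset.mul_sum, Finset.mul_sum, ← Finset.sum_add_distrib]
  set g : ℕ → Polynomial ℂ := fun k =>
    Polynomial.C ((1/2 : ℂ) * (Complex.I^k + (-Complex.I)^k) * (n.choose k : ℂ))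
      * Polynomial.X^(n-k) with hgdef
  have hrhs : ∑ k ∈ Finset.range (n+1),
      (Polynomial.C (1/2 : ℂ) * (Polynomial.C (Complex.I^k * (n.choose k : ℂ)) * Polynomial.X^(n-k))
        + Polynomial.C (1/2 : ℂ) * (Polynomial.C ((-Complex.I)^k * (n.choose k : ℂ)) * Polynomial.X^(n-k)))
      = ∑ k ∈ Finset.range (n+1), g k := by
    refine Finset.sum_congr rfl fun k hk => ?_
    simp only [hgdef, _root_.map_mul, map_add, map_pow, map_neg]
    ring
  rw [hrhs]
  have himage : (Finset.range (n+1)).filter (fun k => k % 2 = 0)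
      = (Finset.range (n/2+1)).image (fun j => 2*j) := by
    ext k
    simp only [Finset.mem_filter, Finset.mem_image, Finset.mem_range]
    constructor
    · rintro ⟨h1, h2⟩
      refine ⟨k/2, ?_, ?_⟩ <;> omega
    · rintro ⟨j, hj, rfl⟩
      omega
  have hodd : ∀ k ∈ Finset.range (n+1),
      k ∉ (Finset.range (n+1)).filter (fun k => k % 2 = 0) → g k = 0 := by
    intro k hkmem hk
    simp only [Finset.mem_range] at hkmem
    simp only [Finset.mem_filter, Finset.mem_range, not_and] at hk
    have hkodd : Odd k := Nat.odd_iff.mpr (by omega)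
    have hneg : (-Complex.I)^k = -(Complex.I^k) := hkodd.neg_pow _
    have hz : (1/2 : ℂ) * (Complex.I^k + (-Complex.I)^k) * (n.choose k : ℂ) = 0 := by
      rw [hneg]; ring
    simp only [hgdef]
    rw [hz, map_zero, zero_mul]
  rw [← Finset.sum_subset (Finset.filter_subset _ _) hodd, himage,
    Finset.sum_image (by intro a _ b _ h; simp only at h; omega)]
  refine Finset.sum_congr rfl fun j hj => ?_
  have hI : Complex.I^(2*j) = (-1 : ℂ)^j := by rw [pow_mul, Complex.I_sq]
  have hIn : (-Complex.I)^(2*j) = (-1 : ℂ)^j := by rw [pow_mul, neg_sq, Complex.I_sq]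
  simp only [hgdef, hI, hIn]
  congr 1
  congr 1
  ring

theorem stmt19 (n : ℕ) (hn : 1 ≤ n) :
    (hermAdj (fun u v : Fin n => u < v)).charpoly =
        ∑ j ∈ Finset.range (n / 2 + 1),
          Polynomial.C ((-1 : ℂ) ^ j * (n.choose (2 * j) : ℂ)) *
            Polynomial.X ^ (n - 2 * j) ∧
    (hermAdj (fun u v : Fin n => u < v)).charpoly =
        Polynomial.C (1 / 2 : ℂ) * (Polynomial.X + Polynomial.C Complex.I) ^ n
          + Polynomial.C (1 / 2 : ℂ) * (Polynomial.X - Polynomial.C Complex.I) ^ n := by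
  obtain ⟨m, rfl⟩ : ∃ m, n = m + 1 := ⟨n - 1, by omega⟩
  have hc : (hermAdj (fun u v : Fin (m+1) => u < v)).charpoly
      = Polynomial.C (1/2 : ℂ) * ((Polynomial.X + Polynomial.C Complex.I) ^ (m+1)
          + (Polynomial.X - Polynomial.C Complex.I) ^ (m+1)) := by
    rw [Matrix.charpoly,
      ← Matrix.det_submatrix_equiv_self (Fin.revPerm : Equiv.Perm (Fin (m+1))),
      Amat_eq, Amat_det_eq, Bmat_det]
  refine ⟨?_, ?_⟩
  · rw [hc, binom_id, mul_add]
  · rw [hc, mul_add]
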